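/- Let Z be a set, n ≥ 2, T ≥ 1, and let ℓ : ℝ^d × Z → ℝ be a loss taking values in [0,1] such that for every z ∈ Z the map w ↦ ℓ(w,z) is L-Lipschitz, differentiable, and β-smooth (its gradient is β-Lipschitz). Let S = (z_1,…,z_n) and S' = (z'_1,…,z'_n) be two samples in Z^n differing in exactly one coordinate. Fix an initial point w_0 ∈ ℝ^d and step sizes μ_1 ≥ μ_2 ≥ … ≥ μ_T > 0 with μ_t ≤ c/t for a constant c > 0. For an index sequence I = (i_1,…,i_T) ∈ {1,…,n}^T, define SGD iterates on S by w_{t}(S,I) = w_{t-1}(S,I) − μ_t ∇_w ℓ(w_{t-1}(S,I), z_{i_t}), and analogously w_t(S',I) on S', both started at w_0. Then for every z ∈ Z, the average over all index sequences satisfies (1/n^T) Σ_{I ∈ {1,…,n}^T} [ ℓ(w_T(S,I), z) − ℓ(w_T(S',I), z) ] ≤ ((1 + 1/(βc))/(n−1)) · (2cL²)^{1/(βc+1)} · T^{βc/(βc+1)}. -/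

import Mathlib

open scoped BigOperators


lemma grad_norm_le {d : ℕ} (f : EuclideanSpace ℝ (Fin d) → ℝ) {L : ℝ} (hL : 0 ≤ L)
    (hlip : ∀ w w', |f w - f w'| ≤ L * ‖w - w'‖) (x : EuclideanSpace ℝ (Fin d)) :
    ‖gradient f x‖ ≤ L := by
  have h1 : ‖fderiv ℝ f x‖ ≤ L := by
    refine norm_fderiv_le_of_lip' ℝ hL ?_
    refine Filter.Eventually.of_forall fun y => ?_
    have := hlip y x
    rwa [Real.norm_eq_abs]
  rw [gradient]
  rwa [LinearIsometryEquiv.norm_map]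

-- 1/(b+1) ≤ log((b+1)/b) for b ≥ 1
lemma inv_le_log_ratio {b : ℕ} (hb : 1 ≤ b) :
    1 / ((b : ℝ) + 1) ≤ Real.log (((b : ℝ) + 1) / b) := by
  have hb0 : (0 : ℝ) < b := by exact_mod_cast hb
  have hb1 : (0 : ℝ) < (b : ℝ) + 1 := by linarith
  have hx : (0 : ℝ) < (b : ℝ) / ((b : ℝ) + 1) := by positivity
  have h := Real.log_le_sub_one_of_pos hx
  have hlog : Real.log (((b : ℝ) + 1) / b) = - Real.log ((b : ℝ) / ((b : ℝ) + 1)) := by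
    rw [← Real.log_inv]
    congr 1
    field_simp
  rw [hlog]
  have : (b : ℝ) / ((b : ℝ) + 1) - 1 = - (1 / ((b : ℝ) + 1)) := by field_simp; ring
  linarith [h.trans_eq this]

-- ∏_{s ∈ Ico a b} (1 + γ/(s+1)) ≤ (b/a)^γ for 1 ≤ a ≤ b, γ > 0
lemma prod_one_add_le_rpow {γ : ℝ} (hγ : 0 < γ) :
    ∀ a b : ℕ, 1 ≤ a → a ≤ b →
      ∏ s ∈ Finset.Ico a b, (1 + γ / ((s : ℝ) + 1)) ≤ ((b : ℝ) / a) ^ γ := by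
  intro a b ha
  induction b with
  | zero => intro hab; omega
  | succ b ih =>
    intro hab
    rcases Nat.lt_or_ge a (b+1) with hlt | hge
    · have hab' : a ≤ b := by omega
      have hb1 : 1 ≤ b := by omega
      have ha0 : (0 : ℝ) < a := by exact_mod_cast ha
      have hb0 : (0 : ℝ) < b := by exact_mod_cast hb1
      rw [Finset.prod_Ico_succ_top hab']
      have hfac : (1 + γ / ((b : ℝ) + 1)) ≤ (((b : ℝ) + 1) / b) ^ γ := by
        have h1 : γ * (1 / ((b : ℝ) + 1)) ≤ γ * Real.log (((b : ℝ) + 1) / b) :=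
          mul_le_mul_of_nonneg_left (inv_le_log_ratio hb1) hγ.le
        have h2 : 1 + γ * Real.log (((b : ℝ) + 1) / b) ≤
            Real.exp (γ * Real.log (((b : ℝ) + 1) / b)) := by
          linarith [Real.add_one_le_exp (γ * Real.log (((b : ℝ) + 1) / b))]
        have hpos : (0 : ℝ) < ((b : ℝ) + 1) / b := by positivity
        rw [Real.rpow_def_of_pos hpos, mul_comm]
        calc 1 + γ / ((b : ℝ) + 1) = 1 + γ * (1 / ((b : ℝ) + 1)) := by ring
          _ ≤ 1 + γ * Real.log (((b : ℝ) + 1) / b) := by linarith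
          _ ≤ _ := h2
      have hprodnn : (0:ℝ) ≤ ∏ s ∈ Finset.Ico a b, (1 + γ / ((s : ℝ) + 1)) :=
        Finset.prod_nonneg fun s _ => by positivity
      calc (∏ s ∈ Finset.Ico a b, (1 + γ / ((s : ℝ) + 1))) * (1 + γ / ((b : ℝ) + 1))
          ≤ ((b : ℝ) / a) ^ γ * (((b : ℝ) + 1) / b) ^ γ := by
            refine mul_le_mul (ih hab') hfac (by positivity) (by positivity)
        _ = (((b : ℝ) + 1) / a) ^ γ := by
            rw [← Real.mul_rpow (by positivity) (by positivity)]
            congr 1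
            field_simp
        _ = (((b + 1 : ℕ) : ℝ) / a) ^ γ := by push_cast; ring_nf
    · have : a = b + 1 := by omega
      subst this
      rw [Finset.Ico_self, Finset.prod_empty, div_self (by positivity), Real.one_rpow]

lemma rpow_conv {γ a b : ℝ} (hγ : 0 < γ) (ha : 0 < a) (hab : a ≤ b) :
    γ * (b - a) * b ^ (-(γ + 1)) ≤ a ^ (-γ) - b ^ (-γ) := by
  have hb : 0 < b := ha.trans_le hab
  have hr : 0 < a / b := by positivity
  have hr1 : a / b ≤ 1 := by rw [div_le_one hb]; exact hab
  -- key : (a/b)^(-γ) ≥ 1 + γ*(1 - a/b)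
  have hlog : 1 - a / b ≤ -Real.log (a / b) := by
    have := Real.log_le_sub_one_of_pos hr
    linarith
  have key : 1 + γ * (1 - a / b) ≤ (a / b) ^ (-γ) := by
    rw [Real.rpow_def_of_pos hr]
    have h1 : γ * (1 - a / b) ≤ γ * (-Real.log (a / b)) :=
      mul_le_mul_of_nonneg_left hlog hγ.le
    have h2 := Real.add_one_le_exp (-γ * Real.log (a / b))
    calc 1 + γ * (1 - a / b) ≤ 1 + γ * (-Real.log (a / b)) := by linarith
      _ = -γ * Real.log (a / b) + 1 := by ring
      _ ≤ Real.exp (-γ * Real.log (a / b)) := h2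
      _ = Real.exp (Real.log (a / b) * -γ) := by ring_nf
  have hmul : (a / b) ^ (-γ) * b ^ (-γ) = a ^ (-γ) := by
    rw [← Real.mul_rpow (le_of_lt hr) hb.le, div_mul_cancel₀]
    exact ne_of_gt hb
  have hbq : b ^ (-(γ + 1)) = b ^ (-γ) * b⁻¹ := by
    rw [← Real.rpow_neg_one b, ← Real.rpow_add hb]
    ring_nf
  have hbg : (0:ℝ) < b ^ (-γ) := Real.rpow_pos_of_pos hb _
  have step : γ * (1 - a / b) * b ^ (-γ) ≤ a ^ (-γ) - b ^ (-γ) := by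
    have := mul_le_mul_of_nonneg_right key hbg.le
    rw [hmul] at this
    nlinarith
  calc γ * (b - a) * b ^ (-(γ + 1)) = γ * (1 - a / b) * b ^ (-γ) := by
        rw [hbq]
        field_simp
    _ ≤ a ^ (-γ) - b ^ (-γ) := step

lemma telescope_sum (f : ℕ → ℝ) : ∀ a b : ℕ, a ≤ b →
    ∑ t ∈ Finset.Ico a b, (f t - f (t + 1)) = f a - f b := by
  intro a b
  induction b with
  | zero => intro hab; have : a = 0 := by omega
            subst this; simp
  | succ b ih =>
    intro hab
    rcases Nat.lt_or_ge a (b + 1) with hlt | hge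
    · have hab' : a ≤ b := by omega
      rw [Finset.sum_Ico_succ_top hab', ih hab']
      ring
    · have : a = b + 1 := by omega
      subst this; simp

lemma tail_sum {γ θ : ℝ} (hγ : 0 < γ) (hθ : 0 < θ) (k T : ℕ)
    (hk : (k : ℝ) ≤ θ) (hk1 : θ ≤ (k : ℝ) + 1) (hkT : k < T) :
    θ ^ (γ + 1) * ∑ t ∈ Finset.Ico k T, ((t : ℝ) + 1) ^ (-(γ + 1)) ≤ (θ - k) + θ / γ := by
  have hq0 : (0:ℝ) < γ + 1 := by positivity
  have htail : ∑ t ∈ Finset.Ico (k + 1) T, ((t : ℝ) + 1) ^ (-(γ + 1)) ≤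
      (((k : ℝ) + 1) ^ (-γ) - ((T : ℝ)) ^ (-γ)) / γ := by
    have h1 : ∀ t ∈ Finset.Ico (k + 1) T, ((t : ℝ) + 1) ^ (-(γ + 1)) ≤
        (((t : ℝ)) ^ (-γ) - (((t : ℝ) + 1)) ^ (-γ)) / γ := by
      intro t ht
      simp only [Finset.mem_Ico] at ht
      have ht0 : (0:ℝ) < t := by
        have : 1 ≤ t := by omega
        exact_mod_cast this
      have := rpow_conv hγ ht0 (by linarith : (t:ℝ) ≤ (t:ℝ) + 1)
      rw [le_div_iff₀ hγ]
      nlinarith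
    calc ∑ t ∈ Finset.Ico (k + 1) T, ((t : ℝ) + 1) ^ (-(γ + 1))
        ≤ ∑ t ∈ Finset.Ico (k + 1) T, ((((t : ℝ)) ^ (-γ) - (((t : ℝ) + 1)) ^ (-γ)) / γ) :=
          Finset.sum_le_sum h1
      _ = (((k + 1 : ℕ) : ℝ) ^ (-γ) - ((T : ℕ) : ℝ) ^ (-γ)) / γ := by
          rw [← Finset.sum_div]
          congr 1
          have := telescope_sum (fun t => ((t : ℝ)) ^ (-γ)) (k + 1) T (by omega)
          simpa using this
      _ = (((k : ℝ) + 1) ^ (-γ) - ((T : ℝ)) ^ (-γ)) / γ := by push_cast; ring_nf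
  have hsplit : ∑ t ∈ Finset.Ico k T, ((t : ℝ) + 1) ^ (-(γ + 1)) =
      ((k : ℝ) + 1) ^ (-(γ + 1)) + ∑ t ∈ Finset.Ico (k + 1) T, ((t : ℝ) + 1) ^ (-(γ + 1)) :=
    Finset.sum_eq_sum_Ico_succ_bot hkT _
  have hconv0 := rpow_conv hγ hθ hk1
  have hconv : ((k : ℝ) + 1) ^ (-γ) / γ ≤
      θ ^ (-γ) / γ - ((k : ℝ) + 1 - θ) * ((k : ℝ) + 1) ^ (-(γ + 1)) := by
    have h2 : ((k : ℝ) + 1 - θ) * ((k : ℝ) + 1) ^ (-(γ + 1)) ≤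
        (θ ^ (-γ) - ((k : ℝ) + 1) ^ (-γ)) / γ := by
      rw [le_div_iff₀ hγ]
      nlinarith
    rw [sub_div] at h2
    linarith
  have hT0 : (0:ℝ) ≤ ((T:ℝ)) ^ (-γ) := Real.rpow_nonneg (by positivity) _
  have hsum : ∑ t ∈ Finset.Ico k T, ((t : ℝ) + 1) ^ (-(γ + 1)) ≤
      θ ^ (-γ) / γ + (θ - k) * ((k : ℝ) + 1) ^ (-(γ + 1)) := by
    have hT0' : (0:ℝ) ≤ ((T:ℝ)) ^ (-γ) / γ := div_nonneg hT0 hγ.le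
    rw [hsplit, sub_div] at *
    linarith [htail, hconv, hT0']
  have hθq : (0:ℝ) ≤ θ ^ (γ + 1) := Real.rpow_nonneg hθ.le _
  have hmul := mul_le_mul_of_nonneg_left hsum hθq
  have e1 : θ ^ (γ + 1) * (θ ^ (-γ) / γ) = θ / γ := by
    rw [← mul_div_assoc, ← Real.rpow_add hθ]
    norm_num
  have e2 : θ ^ (γ + 1) * ((k : ℝ) + 1) ^ (-(γ + 1)) ≤ 1 := by
    have hk10 : (0:ℝ) < (k : ℝ) + 1 := by positivity
    rw [Real.rpow_neg hk10.le, ← div_eq_mul_inv, ← Real.div_rpow hθ.le hk10.le]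
    exact Real.rpow_le_one (by positivity) (by rw [div_le_one hk10]; exact hk1) hq0.le
  have hθk : (0:ℝ) ≤ θ - k := by linarith
  calc θ ^ (γ + 1) * ∑ t ∈ Finset.Ico k T, ((t : ℝ) + 1) ^ (-(γ + 1))
      ≤ θ ^ (γ + 1) * (θ ^ (-γ) / γ + (θ - k) * ((k : ℝ) + 1) ^ (-(γ + 1))) := hmul
    _ = θ / γ + (θ - k) * (θ ^ (γ + 1) * ((k : ℝ) + 1) ^ (-(γ + 1))) := by
        rw [mul_add, e1]; ring
    _ ≤ θ / γ + (θ - k) * 1 := by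
        have := mul_le_mul_of_nonneg_left e2 hθk
        linarith
    _ = (θ - k) + θ / γ := by ring

lemma count_fixed {n T : ℕ} (hT : 1 ≤ T) (t : Fin T) (i : Fin n) (a : ℝ) :
    ∑ I : Fin T → Fin n, (if I t = i then a else 0) = (n : ℝ) ^ (T - 1) * a := by
  classical
  rw [← Equiv.sum_comp (Equiv.funSplitAt t (Fin n)).symm
    (fun I : Fin T → Fin n => if I t = i then a else 0)]
  have hval : ∀ p : Fin n × ({ j // j ≠ t } → Fin n),
      ((Equiv.funSplitAt t (Fin n)).symm p) t = p.1 := by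
    intro p
    simp [Equiv.funSplitAt, Equiv.piSplitAt]
  rw [Fintype.sum_prod_type]
  have : ∀ v : Fin n, ∑ g : { j // j ≠ t } → Fin n,
      (if ((Equiv.funSplitAt t (Fin n)).symm (v, g)) t = i then a else 0)
      = (if v = i then a else 0) * Fintype.card ({ j // j ≠ t } → Fin n) := by
    intro v
    have hg : ∀ g : { j // j ≠ t } → Fin n,
        (if ((Equiv.funSplitAt t (Fin n)).symm (v, g)) t = i then a else 0)
        = (if v = i then a else 0) := fun g => by rw [hval (v, g)]
    rw [Finset.sum_congr rfl fun g _ => hg g, Finset.sum_const]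
    simp [Finset.card_univ, mul_comm]
  rw [Finset.sum_congr rfl fun v _ => this v]
  rw [← Finset.sum_mul, Finset.sum_ite_eq' Finset.univ i fun _ => a]
  have hcard : (Fintype.card ({ j // j ≠ t } → Fin n) : ℝ) = (n : ℝ) ^ (T - 1) := by
    rw [Fintype.card_fun]
    have : Fintype.card { j : Fin T // j ≠ t } = T - 1 := by
      rw [Fintype.card_subtype_compl]
      simp
    rw [this, Fintype.card_fin]
    push_cast
    ring
  simp [hcard, mul_comm]

lemma count_hit {n T k : ℕ} (hT : 1 ≤ T) (i : Fin n) :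
    (((Finset.univ.filter
        (fun I : Fin T → Fin n => ∃ s : Fin T, (s : ℕ) < k ∧ I s = i)).card : ℝ))
      ≤ (k : ℝ) * (n : ℝ) ^ (T - 1) := by
  classical
  set H := Finset.univ.filter
      (fun I : Fin T → Fin n => ∃ s : Fin T, (s : ℕ) < k ∧ I s = i) with hH
  set F := Finset.univ.filter (fun s : Fin T => (s : ℕ) < k) with hF
  have h1 : ∀ I ∈ H, (1 : ℝ) ≤ ∑ s ∈ F, (if I s = i then (1 : ℝ) else 0) := by
    intro I hI
    rw [hH, Finset.mem_filter] at hI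
    obtain ⟨-, s₀, hs₀, hIs₀⟩ := hI
    have hmem : s₀ ∈ F := by rw [hF, Finset.mem_filter]; exact ⟨Finset.mem_univ _, hs₀⟩
    have := Finset.single_le_sum (f := fun s => if I s = i then (1 : ℝ) else 0)
      (fun s _ => by positivity) hmem
    simp only [if_pos hIs₀] at this
    exact this
  have h2 : (H.card : ℝ) ≤ ∑ I ∈ H, ∑ s ∈ F, (if I s = i then (1 : ℝ) else 0) := by
    calc (H.card : ℝ) = ∑ _I ∈ H, (1 : ℝ) := by rw [Finset.sum_const]; simp
      _ ≤ _ := Finset.sum_le_sum h1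
  have h3 : ∑ I ∈ H, ∑ s ∈ F, (if I s = i then (1 : ℝ) else 0) ≤
      ∑ I : Fin T → Fin n, ∑ s ∈ F, (if I s = i then (1 : ℝ) else 0) := by
    apply Finset.sum_le_sum_of_subset_of_nonneg (Finset.filter_subset _ _)
    intro I _ _
    exact Finset.sum_nonneg fun s _ => by positivity
  have h4 : ∑ I : Fin T → Fin n, ∑ s ∈ F, (if I s = i then (1 : ℝ) else 0) =
      ∑ s ∈ F, ((n : ℝ) ^ (T - 1) * 1) := by
    rw [Finset.sum_comm]
    exact Finset.sum_congr rfl fun s _ => count_fixed hT s i 1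
  have h5 : F.card ≤ k := by
    have : ∀ s ∈ F, (s : ℕ) ∈ Finset.range k := by
      intro s hs
      rw [hF, Finset.mem_filter] at hs
      exact Finset.mem_range.mpr hs.2
    calc F.card ≤ (Finset.range k).card :=
          Finset.card_le_card_of_injOn (fun s => (s : ℕ)) this
            (fun a _ b _ h => Fin.val_injective h)
      _ = k := Finset.card_range k
  calc (H.card : ℝ) ≤ ∑ s ∈ F, ((n : ℝ) ^ (T - 1) * 1) := by
        rw [← h4]; exact h2.trans h3
    _ = (F.card : ℝ) * (n : ℝ) ^ (T - 1) := by rw [Finset.sum_const]; simp [mul_comm]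
    _ ≤ (k : ℝ) * (n : ℝ) ^ (T - 1) := by
        have : (F.card : ℝ) ≤ (k : ℝ) := by exact_mod_cast h5
        have hnn : (0:ℝ) ≤ (n : ℝ) ^ (T - 1) := by positivity
        nlinarith

set_option maxHeartbeats 1600000 in
theorem sgd_uniform_stability
    {Z : Type*} (dd n T : ℕ) (hn : 2 ≤ n) (hT : 1 ≤ T)
    (ℓ : EuclideanSpace ℝ (Fin dd) → Z → ℝ)
    (L β c : ℝ) (hL : 0 ≤ L) (hβ : 0 < β) (hc : 0 < c)
    (hrange : ∀ w z, ℓ w z ∈ Set.Icc (0 : ℝ) 1)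
    (hlip : ∀ (z : Z) (w w' : EuclideanSpace ℝ (Fin dd)),
      |ℓ w z - ℓ w' z| ≤ L * ‖w - w'‖)
    (hdiff : ∀ z : Z, Differentiable ℝ (fun w => ℓ w z))
    (hsmooth : ∀ (z : Z) (w w' : EuclideanSpace ℝ (Fin dd)),
      ‖gradient (fun v => ℓ v z) w - gradient (fun v => ℓ v z) w'‖ ≤ β * ‖w - w'‖)
    (S S' : Fin n → Z)
    (hdiffer : ∃ i : Fin n, S i ≠ S' i ∧ ∀ j : Fin n, j ≠ i → S j = S' j)
    (w₀ : EuclideanSpace ℝ (Fin dd))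
    (μstep : ℕ → ℝ)
    (hμpos : ∀ t : ℕ, 1 ≤ t → t ≤ T → 0 < μstep t)
    (hμmono : ∀ s t : ℕ, 1 ≤ s → s ≤ t → t ≤ T → μstep t ≤ μstep s)
    (hμle : ∀ t : ℕ, 1 ≤ t → t ≤ T → μstep t ≤ c / t)
    -- the SGD iterates on a sample `S''` with index sequence `I`
    (w : (Fin n → Z) → (Fin T → Fin n) → ℕ → EuclideanSpace ℝ (Fin dd))
    (hw0 : ∀ S'' I, w S'' I 0 = w₀)
    (hwrec : ∀ (S'' : Fin n → Z) (I : Fin T → Fin n) (t : ℕ) (ht : t < T),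
      w S'' I (t + 1) =
        w S'' I t - μstep (t + 1) •
          gradient (fun v => ℓ v (S'' (I ⟨t, ht⟩))) (w S'' I t)) :
    ∀ z : Z,
      (1 / (n : ℝ) ^ T) * ∑ I : Fin T → Fin n, (ℓ (w S I T) z - ℓ (w S' I T) z) ≤
        ((1 + 1 / (β * c)) / ((n : ℝ) - 1)) * (2 * c * L ^ 2) ^ ((1 : ℝ) / (β * c + 1)) *
          (T : ℝ) ^ (β * c / (β * c + 1)) := by
  intro z
  obtain ⟨i, hiS, hagree⟩ := hdiffer
  have hγ : 0 < β * c := mul_pos hβ hc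
  have hn1 : (0:ℝ) < (n:ℝ) - 1 := by
    have : (2:ℝ) ≤ (n:ℝ) := by exact_mod_cast hn
    linarith
  by_cases hL0 : L = 0
  · -- degenerate case : loss is constant in w
    have hzero : ∀ I : Fin T → Fin n, ℓ (w S I T) z - ℓ (w S' I T) z = 0 := by
      intro I
      have h := hlip z (w S I T) (w S' I T)
      rw [hL0, zero_mul] at h
      have := abs_nonneg (ℓ (w S I T) z - ℓ (w S' I T) z)
      have habs : |ℓ (w S I T) z - ℓ (w S' I T) z| = 0 := le_antisymm h this
      exact abs_eq_zero.mp habs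
    rw [Finset.sum_congr rfl fun I _ => hzero I, Finset.sum_const, smul_zero, mul_zero]
    have h1 : (0:ℝ) ≤ (1 + 1 / (β * c)) / ((n : ℝ) - 1) := by positivity
    have h2 : (0:ℝ) ≤ (2 * c * L ^ 2) ^ ((1 : ℝ) / (β * c + 1)) :=
      Real.rpow_nonneg (by positivity) _
    have h3 : (0:ℝ) ≤ ((T:ℝ)) ^ (β * c / (β * c + 1)) :=
      Real.rpow_nonneg (by positivity) _
    positivity
  · have hLpos : 0 < L := lt_of_le_of_ne hL (Ne.symm hL0)
    have hTpos : (0:ℝ) < (T:ℝ) := by exact_mod_cast hT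
    have hbase : (0:ℝ) < 2 * c * L ^ 2 := by positivity
    set γ := β * c with hγdef
    set θ := (2 * c * L ^ 2) ^ ((1 : ℝ) / (γ + 1)) * (T : ℝ) ^ (γ / (γ + 1)) with hθdef
    have hq0 : (0:ℝ) < γ + 1 := by positivity
    have hθpos : 0 < θ := mul_pos (Real.rpow_pos_of_pos hbase _) (Real.rpow_pos_of_pos hTpos _)
    have e1 : ((2 * c * L ^ 2) ^ ((1:ℝ)/(γ+1))) ^ (γ+1) = 2 * c * L ^ 2 := by
      rw [← Real.rpow_mul hbase.le, one_div, inv_mul_cancel₀ hq0.ne', Real.rpow_one]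
    have e2 : (((T:ℝ)) ^ (γ/(γ+1))) ^ (γ+1) = (T:ℝ) ^ γ := by
      rw [← Real.rpow_mul hTpos.le, div_mul_cancel₀ _ hq0.ne']
    have hθq : θ ^ (γ + 1) = 2 * c * L ^ 2 * (T : ℝ) ^ γ := by
      rw [hθdef, Real.mul_rpow (Real.rpow_nonneg hbase.le _) (Real.rpow_nonneg hTpos.le _),
        e1, e2]
    -- the cutoff
    set k := min (Nat.floor θ) T with hkdef
    have hkT : k ≤ T := min_le_right _ _
    have hkθ : (k : ℝ) ≤ θ := by
      calc (k : ℝ) ≤ (Nat.floor θ : ℝ) := by exact_mod_cast min_le_left _ _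
        _ ≤ θ := Nat.floor_le hθpos.le
    -- indicator of hitting the differing index
    set χ : (Fin T → Fin n) → ℕ → ℝ :=
      fun I t => if h : t < T then (if I ⟨t, h⟩ = i then (1:ℝ) else 0) else 0 with hχdef
    have hχnn : ∀ I t, 0 ≤ χ I t := by
      intro I t
      rw [hχdef]
      dsimp only
      split_ifs <;> norm_num
    -- gradient norm bound
    have hgradL : ∀ (z' : Z) (x : EuclideanSpace ℝ (Fin dd)),
        ‖gradient (fun v => ℓ v z') x‖ ≤ L :=
      fun z' x => grad_norm_le _ hL (fun u u' => hlip z' u u') x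
    -- one-step recursion for the divergence
    have hstep : ∀ (I : Fin T → Fin n) (t : ℕ), t < T →
        ‖w S I (t+1) - w S' I (t+1)‖ ≤
          (1 + β * μstep (t+1)) * ‖w S I t - w S' I t‖ + χ I t * (2 * L * μstep (t+1)) := by
      intro I t ht
      have hμnn : 0 ≤ μstep (t+1) := (hμpos (t+1) (by omega) (by omega)).le
      have hβμ : 0 ≤ β * μstep (t+1) * ‖w S I t - w S' I t‖ := by positivity
      rw [hwrec S I t ht, hwrec S' I t ht]
      by_cases hit : I ⟨t, ht⟩ = i
      · have hχ1 : χ I t = 1 := by rw [hχdef]; dsimp only; rw [dif_pos ht, if_pos hit]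
        rw [hχ1]
        set G₁ := gradient (fun v => ℓ v (S (I ⟨t, ht⟩))) (w S I t) with hG₁
        set G₂ := gradient (fun v => ℓ v (S' (I ⟨t, ht⟩))) (w S' I t) with hG₂
        have hrw : (w S I t - μstep (t+1) • G₁) - (w S' I t - μstep (t+1) • G₂)
            = (w S I t - w S' I t) + (μstep (t+1) • G₂ - μstep (t+1) • G₁) := by abel
        have h1 : ‖(w S I t - μstep (t+1) • G₁) - (w S' I t - μstep (t+1) • G₂)‖ ≤
            ‖w S I t - w S' I t‖ + (‖μstep (t+1) • G₂‖ + ‖μstep (t+1) • G₁‖) := by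
          rw [hrw]
          refine (norm_add_le _ _).trans ?_
          have := norm_sub_le (μstep (t+1) • G₂) (μstep (t+1) • G₁)
          linarith
        have h2 : ‖μstep (t+1) • G₁‖ ≤ μstep (t+1) * L := by
          rw [norm_smul, Real.norm_eq_abs, abs_of_nonneg hμnn]
          exact mul_le_mul_of_nonneg_left (hgradL _ _) hμnn
        have h3 : ‖μstep (t+1) • G₂‖ ≤ μstep (t+1) * L := by
          rw [norm_smul, Real.norm_eq_abs, abs_of_nonneg hμnn]
          exact mul_le_mul_of_nonneg_left (hgradL _ _) hμnn
        calc ‖(w S I t - μstep (t+1) • G₁) - (w S' I t - μstep (t+1) • G₂)‖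
            ≤ ‖w S I t - w S' I t‖ + (μstep (t+1) * L + μstep (t+1) * L) := by linarith
          _ ≤ (1 + β * μstep (t+1)) * ‖w S I t - w S' I t‖ + 1 * (2 * L * μstep (t+1)) := by
              nlinarith
      · have hχ0 : χ I t = 0 := by rw [hχdef]; dsimp only; rw [dif_pos ht, if_neg hit]
        rw [hχ0, zero_mul, add_zero]
        have hSS : S (I ⟨t, ht⟩) = S' (I ⟨t, ht⟩) := hagree _ hit
        rw [← hSS]
        set g := fun x => gradient (fun v => ℓ v (S (I ⟨t, ht⟩))) x with hg
        have hrw : (w S I t - μstep (t+1) • g (w S I t)) - (w S' I t - μstep (t+1) • g (w S' I t))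
            = (w S I t - w S' I t) - μstep (t+1) • (g (w S I t) - g (w S' I t)) := by
          rw [smul_sub]; abel
        rw [hrw]
        refine (norm_sub_le _ _).trans ?_
        have h2 : ‖μstep (t+1) • (g (w S I t) - g (w S' I t))‖ ≤
            μstep (t+1) * (β * ‖w S I t - w S' I t‖) := by
          rw [norm_smul, Real.norm_eq_abs, abs_of_nonneg hμnn]
          exact mul_le_mul_of_nonneg_left (hsmooth _ _ _) hμnn
        nlinarith
    -- before the first hit, the iterates agree
    have hzero : ∀ (I : Fin T → Fin n), (∀ s : Fin T, (s : ℕ) < k → I s ≠ i) →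
        ∀ m, m ≤ k → w S I m = w S' I m := by
      intro I hno m
      induction m with
      | zero => intro _; rw [hw0, hw0]
      | succ m ih =>
        intro hm
        have hmT : m < T := by omega
        have hne : I ⟨m, hmT⟩ ≠ i := hno ⟨m, hmT⟩ (by simp; omega)
        rw [hwrec S I m hmT, hwrec S' I m hmT, ih (by omega), hagree (I ⟨m, hmT⟩) hne]
    -- unrolled recursion
    have hunroll : ∀ (I : Fin T → Fin n), (∀ s : Fin T, (s : ℕ) < k → I s ≠ i) →
        ∀ m, k ≤ m → m ≤ T →
        ‖w S I m - w S' I m‖ ≤ ∑ t ∈ Finset.Ico k m,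
          χ I t * (2 * L * μstep (t+1)) * ∏ s ∈ Finset.Ico (t+1) m, (1 + β * μstep (s+1)) := by
      intro I hno m
      induction m with
      | zero =>
        intro h0 _
        have hk0 : k = 0 := by omega
        rw [hzero I hno 0 (by omega)]
        simp
      | succ m ih =>
        intro hkm hmT1
        have hmT : m < T := by omega
        rcases Nat.lt_or_ge m k with hlt | hge
        · have hk : k = m + 1 := by omega
          rw [hzero I hno (m+1) (by omega)]
          simp [hk]
        · have hIH := ih hge (by omega)
          have hμnn : 0 ≤ μstep (m+1) := (hμpos (m+1) (by omega) (by omega)).le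
          have hfacnn : (0:ℝ) ≤ 1 + β * μstep (m+1) := by positivity
          have hkey := hstep I m hmT
          have hmul := mul_le_mul_of_nonneg_left hIH hfacnn
          have hsum_eq : (1 + β * μstep (m+1)) * (∑ t ∈ Finset.Ico k m,
                χ I t * (2 * L * μstep (t+1)) * ∏ s ∈ Finset.Ico (t+1) m, (1 + β * μstep (s+1)))
              + χ I m * (2 * L * μstep (m+1))
              = ∑ t ∈ Finset.Ico k (m+1),
                χ I t * (2 * L * μstep (t+1)) * ∏ s ∈ Finset.Ico (t+1) (m+1), (1 + β * μstep (s+1)) := by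
            rw [Finset.sum_Ico_succ_top hge, Finset.mul_sum]
            congr 1
            · refine Finset.sum_congr rfl fun t ht => ?_
              rw [Finset.mem_Ico] at ht
              rw [Finset.prod_Ico_succ_top (by omega : t + 1 ≤ m)]
              ring
            · rw [Finset.Ico_self, Finset.prod_empty, mul_one]
          calc ‖w S I (m+1) - w S' I (m+1)‖
              ≤ (1 + β * μstep (m+1)) * ‖w S I m - w S' I m‖ + χ I m * (2 * L * μstep (m+1)) := hkey
            _ ≤ (1 + β * μstep (m+1)) * (∑ t ∈ Finset.Ico k m,
                  χ I t * (2 * L * μstep (t+1)) * ∏ s ∈ Finset.Ico (t+1) m, (1 + β * μstep (s+1)))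
                + χ I m * (2 * L * μstep (m+1)) := by linarith
            _ = _ := hsum_eq
    -- the per-sequence tail bound
    set tailB : (Fin T → Fin n) → ℝ := fun I => ∑ t ∈ Finset.Ico k T,
      χ I t * (2 * L^2 * μstep (t+1)) * ∏ s ∈ Finset.Ico (t+1) T, (1 + β * μstep (s+1))
      with htB
    have hprodnn : ∀ t : ℕ, (0:ℝ) ≤ ∏ s ∈ Finset.Ico (t+1) T, (1 + β * μstep (s+1)) := by
      intro t
      refine Finset.prod_nonneg fun s hs => ?_
      rw [Finset.mem_Ico] at hs
      have : 0 ≤ μstep (s+1) := (hμpos (s+1) (by omega) (by omega)).le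
      positivity
    have htailnn : ∀ I, 0 ≤ tailB I := by
      intro I
      refine Finset.sum_nonneg fun t ht => ?_
      rw [Finset.mem_Ico] at ht
      have h1 : 0 ≤ μstep (t+1) := (hμpos (t+1) (by omega) (by omega)).le
      have h2 := hχnn I t
      have h3 := hprodnn t
      positivity
    have hbound1 : ∀ I : Fin T → Fin n, ℓ (w S I T) z - ℓ (w S' I T) z ≤ 1 := by
      intro I
      have h1 := hrange (w S I T) z
      have h2 := hrange (w S' I T) z
      simp only [Set.mem_Icc] at h1 h2
      linarith [h1.2, h2.1]
    have hbound2 : ∀ I : Fin T → Fin n, (∀ s : Fin T, (s : ℕ) < k → I s ≠ i) →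
        ℓ (w S I T) z - ℓ (w S' I T) z ≤ tailB I := by
      intro I hno
      have h1 : ℓ (w S I T) z - ℓ (w S' I T) z ≤ L * ‖w S I T - w S' I T‖ :=
        (le_abs_self _).trans (hlip z _ _)
      have h2 := mul_le_mul_of_nonneg_left (hunroll I hno T hkT le_rfl) hL
      have h3 : L * (∑ t ∈ Finset.Ico k T,
          χ I t * (2 * L * μstep (t+1)) * ∏ s ∈ Finset.Ico (t+1) T, (1 + β * μstep (s+1)))
          = tailB I := by
        rw [htB, Finset.mul_sum]
        exact Finset.sum_congr rfl fun t ht => by ring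
      linarith [h2.trans_eq h3]
    -- split the sum according to whether the differing index is hit early
    set H : Finset (Fin T → Fin n) := Finset.univ.filter
      (fun I : Fin T → Fin n => ∃ s : Fin T, (s : ℕ) < k ∧ I s = i) with hHdef
    have hsplit : ∑ I : Fin T → Fin n, (ℓ (w S I T) z - ℓ (w S' I T) z) ≤
        (H.card : ℝ) + ∑ I : Fin T → Fin n, tailB I := by
      rw [← Finset.sum_filter_add_sum_filter_not Finset.univ
        (fun I : Fin T → Fin n => ∃ s : Fin T, (s : ℕ) < k ∧ I s = i)
        (fun I : Fin T → Fin n => ℓ (w S I T) z - ℓ (w S' I T) z)]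
      have hA : ∑ I ∈ H, (ℓ (w S I T) z - ℓ (w S' I T) z) ≤ (H.card : ℝ) := by
        calc ∑ I ∈ H, (ℓ (w S I T) z - ℓ (w S' I T) z) ≤ ∑ _I ∈ H, (1:ℝ) :=
              Finset.sum_le_sum fun I _ => hbound1 I
          _ = (H.card : ℝ) := by rw [Finset.sum_const]; simp
      have hB : ∑ I ∈ Finset.univ.filter (fun I : Fin T → Fin n =>
            ¬ ∃ s : Fin T, (s : ℕ) < k ∧ I s = i), (ℓ (w S I T) z - ℓ (w S' I T) z) ≤
          ∑ I : Fin T → Fin n, tailB I := by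
        have hstep1 : ∑ I ∈ Finset.univ.filter (fun I : Fin T → Fin n =>
              ¬ ∃ s : Fin T, (s : ℕ) < k ∧ I s = i), (ℓ (w S I T) z - ℓ (w S' I T) z) ≤
            ∑ I ∈ Finset.univ.filter (fun I : Fin T → Fin n =>
              ¬ ∃ s : Fin T, (s : ℕ) < k ∧ I s = i), tailB I := by
          refine Finset.sum_le_sum fun I hI => ?_
          rw [Finset.mem_filter] at hI
          refine hbound2 I fun s hs hIs => hI.2 ⟨s, hs, hIs⟩
        refine hstep1.trans ?_
        exact Finset.sum_le_sum_of_subset_of_nonneg (Finset.filter_subset _ _)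
          fun I _ _ => htailnn I
      rw [hHdef] at hA
      linarith
    have hcard : (H.card : ℝ) ≤ (k : ℝ) * (n : ℝ) ^ (T - 1) := by
      rw [hHdef]; exact count_hit hT i
    -- swap the sums and count
    have hswap : ∑ I : Fin T → Fin n, tailB I =
        (n:ℝ) ^ (T - 1) * ∑ t ∈ Finset.Ico k T,
          ((2 * L^2 * μstep (t+1)) * ∏ s ∈ Finset.Ico (t+1) T, (1 + β * μstep (s+1))) := by
      rw [htB, Finset.sum_comm, Finset.mul_sum]
      refine Finset.sum_congr rfl fun t ht => ?_
      rw [Finset.mem_Ico] at ht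
      have htT : t < T := ht.2
      have hform : ∀ I : Fin T → Fin n,
          χ I t * (2 * L^2 * μstep (t+1)) * ∏ s ∈ Finset.Ico (t+1) T, (1 + β * μstep (s+1)) =
          (if I ⟨t, htT⟩ = i then
            ((2 * L^2 * μstep (t+1)) * ∏ s ∈ Finset.Ico (t+1) T, (1 + β * μstep (s+1)))
          else 0) := by
        intro I
        rw [hχdef]
        dsimp only
        rw [dif_pos htT]
        split_ifs with h <;> ring
      rw [Finset.sum_congr rfl fun I _ => hform I, count_fixed hT ⟨t, htT⟩ i _]
    -- the analytic bound on each tail coefficient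
    have hCt : ∀ t ∈ Finset.Ico k T,
        (2 * L^2 * μstep (t+1)) * ∏ s ∈ Finset.Ico (t+1) T, (1 + β * μstep (s+1))
        ≤ θ ^ (γ+1) * ((t:ℝ)+1) ^ (-(γ+1)) := by
      intro t ht
      rw [Finset.mem_Ico] at ht
      have ht1 : (0:ℝ) < (t:ℝ)+1 := by positivity
      have hμnn : 0 ≤ μstep (t+1) := (hμpos (t+1) (by omega) (by omega)).le
      have hμt : μstep (t+1) ≤ c / ((t:ℝ)+1) := by
        have h := hμle (t+1) (by omega) (by omega)
        push_cast at h
        exact h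
      have hprod1 : ∏ s ∈ Finset.Ico (t+1) T, (1 + β * μstep (s+1)) ≤
          ∏ s ∈ Finset.Ico (t+1) T, (1 + γ / ((s:ℝ)+1)) := by
        refine Finset.prod_le_prod (fun s hs => ?_) (fun s hs => ?_)
        · rw [Finset.mem_Ico] at hs
          have : 0 ≤ μstep (s+1) := (hμpos (s+1) (by omega) (by omega)).le
          positivity
        · rw [Finset.mem_Ico] at hs
          have hμs : μstep (s+1) ≤ c / ((s:ℝ)+1) := by
            have h := hμle (s+1) (by omega) (by omega)
            push_cast at h
            exact h
          have hs1 : (0:ℝ) < (s:ℝ)+1 := by positivity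
          have : β * μstep (s+1) ≤ β * (c / ((s:ℝ)+1)) :=
            mul_le_mul_of_nonneg_left hμs hβ.le
          have heq : β * (c / ((s:ℝ)+1)) = γ / ((s:ℝ)+1) := by
            rw [hγdef]; ring
          linarith
      have hprod2 : ∏ s ∈ Finset.Ico (t+1) T, (1 + γ / ((s:ℝ)+1)) ≤
          ((T:ℝ)/((t:ℝ)+1)) ^ γ := by
        have h := prod_one_add_le_rpow hγ (t+1) T (by omega) (by omega)
        have hcast : (((t+1 : ℕ)):ℝ) = (t:ℝ)+1 := by push_cast; ring
        rwa [hcast] at h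
      have hP1 : (0:ℝ) ≤ ∏ s ∈ Finset.Ico (t+1) T, (1 + β * μstep (s+1)) := hprodnn t
      have hstep1 : (2 * L^2 * μstep (t+1)) *
            ∏ s ∈ Finset.Ico (t+1) T, (1 + β * μstep (s+1)) ≤
          (2 * L^2 * (c / ((t:ℝ)+1))) * (((T:ℝ)/((t:ℝ)+1)) ^ γ) := by
        have hmul1 : 2 * L^2 * μstep (t+1) ≤ 2 * L^2 * (c / ((t:ℝ)+1)) := by nlinarith
        refine mul_le_mul hmul1 (hprod1.trans hprod2) hP1 (by positivity)
      refine hstep1.trans_eq ?_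
      rw [hθq, Real.div_rpow hTpos.le ht1.le]
      have ha : ((t:ℝ)+1) ^ (-(γ+1)) = (((t:ℝ)+1) ^ γ * ((t:ℝ)+1))⁻¹ := by
        rw [Real.rpow_neg ht1.le, Real.rpow_add ht1, Real.rpow_one]
      rw [ha]
      have hne : ((t:ℝ)+1) ^ γ ≠ 0 := (Real.rpow_pos_of_pos ht1 _).ne'
      field_simp
    -- the main analytic estimate
    have hfinal : (k:ℝ) + ∑ t ∈ Finset.Ico k T,
        ((2 * L^2 * μstep (t+1)) * ∏ s ∈ Finset.Ico (t+1) T, (1 + β * μstep (s+1)))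
        ≤ θ * (1 + 1/γ) := by
      have hexp : θ * (1 + 1/γ) = θ + θ/γ := by field_simp
      rcases Nat.lt_or_ge k T with hkT' | hge
      · have hkfloor : k = Nat.floor θ := by
          rw [hkdef]
          rw [hkdef] at hkT'
          omega
        have hθk1 : θ ≤ (k:ℝ) + 1 := by
          rw [hkfloor]
          exact_mod_cast (Nat.lt_floor_add_one θ).le
        have h1 := tail_sum hγ hθpos k T hkθ hθk1 hkT'
        have h2 : ∑ t ∈ Finset.Ico k T,
            ((2 * L^2 * μstep (t+1)) * ∏ s ∈ Finset.Ico (t+1) T, (1 + β * μstep (s+1)))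
            ≤ θ ^ (γ+1) * ∑ t ∈ Finset.Ico k T, ((t:ℝ)+1) ^ (-(γ+1)) := by
          rw [Finset.mul_sum]
          exact Finset.sum_le_sum hCt
        linarith
      · have hkeq : k = T := le_antisymm hkT hge
        have hTθ : (T:ℝ) ≤ θ := by rw [hkeq] at hkθ; exact_mod_cast hkθ
        have hθγ : 0 ≤ θ/γ := by positivity
        rw [hkeq, Finset.Ico_self, Finset.sum_empty, add_zero]
        linarith
    -- put everything together
    have hpownn : (0:ℝ) ≤ (n:ℝ) ^ (T-1) := by positivity
    have htotal : ∑ I : Fin T → Fin n, (ℓ (w S I T) z - ℓ (w S' I T) z) ≤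
        (n:ℝ) ^ (T-1) * (θ * (1 + 1/γ)) := by
      have h5 := mul_le_mul_of_nonneg_left hfinal hpownn
      rw [mul_add] at h5
      have h6 : (H.card : ℝ) + ∑ I : Fin T → Fin n, tailB I ≤
          (n:ℝ)^(T-1) * (k:ℝ) + (n:ℝ)^(T-1) * ∑ t ∈ Finset.Ico k T,
            ((2 * L^2 * μstep (t+1)) * ∏ s ∈ Finset.Ico (t+1) T, (1 + β * μstep (s+1))) := by
        rw [hswap]
        have : (H.card : ℝ) ≤ (n:ℝ)^(T-1) * (k:ℝ) := by rw [mul_comm]; exact hcard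
        linarith
      linarith
    have hnpos : (0:ℝ) < (n:ℝ) := by
      have : (2:ℝ) ≤ (n:ℝ) := by exact_mod_cast hn
      linarith
    have hnpow : ((n:ℝ)) ^ T = (n:ℝ) ^ (T-1) * (n:ℝ) := by
      rw [← pow_succ]
      congr 1
      omega
    have hLHS : (1 / (n:ℝ)^T) * ∑ I : Fin T → Fin n, (ℓ (w S I T) z - ℓ (w S' I T) z) ≤
        θ * (1 + 1/γ) / (n:ℝ) := by
      have hinv : (0:ℝ) ≤ 1 / (n:ℝ)^T := by positivity
      calc (1 / (n:ℝ)^T) * ∑ I : Fin T → Fin n, (ℓ (w S I T) z - ℓ (w S' I T) z)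
          ≤ (1 / (n:ℝ)^T) * ((n:ℝ)^(T-1) * (θ * (1 + 1/γ))) :=
            mul_le_mul_of_nonneg_left htotal hinv
        _ = θ * (1 + 1/γ) / (n:ℝ) := by
            rw [hnpow]
            have h1 : ((n:ℝ))^(T-1) ≠ 0 := by positivity
            field_simp
    refine hLHS.trans ?_
    have hRHS : ((1 + 1/γ) / ((n:ℝ)-1)) * (2*c*L^2) ^ ((1:ℝ)/(γ+1)) * (T:ℝ) ^ (γ/(γ+1))
        = θ * (1 + 1/γ) / ((n:ℝ)-1) := by
      rw [hθdef]
      ring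
    rw [hRHS]
    have hnum : 0 ≤ θ * (1 + 1/γ) := by positivity
    gcongr
    · linarith
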